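/- Let d : P₋ → P₊ be a projective presentation of weight δ with cokernel M, and suppose E(d, M) = 0 (i.e., the induced map Hom_A(P₊,M) → Hom_A(P₋,M) is surjective). Then for every quotient module N of M: δ(dim N) = dim_k Hom_A(M, N); in particular δ(dim N) = 0 if and only if N = 0, and δ(dim N) > 0 for every nonzero quotient N. -/

import Mathlib

/-!  Common setup: tropical F-polynomials and general presentations
for a finite-dimensional basic algebra `A` over `k`, following Fei,
"Tropical F-polynomials and general presentations".
All modules are *right* `A`-modules, encoded as left `Aᵐᵒᵖ`-modules. -/

namespace TropGP

open Module MulOpposite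

section Defs

variable (k : Type) [Field k]
variable (A : Type) [Ring A] [Algebra k A]

/-- The right regular `A`-module structure on `A` is compatible with the `k`-action. -/
instance instTowerOpA : IsScalarTower k Aᵐᵒᵖ A :=
  ⟨fun c b x => by
    rw [MulOpposite.smul_eq_mul_unop, MulOpposite.smul_eq_mul_unop, MulOpposite.unop_smul,
      Algebra.mul_smul_comm]⟩

/-- Shortcut instance: scalars of `k` commute with the right `A`-action. -/
instance (priority := 5000) instSMulCommOpK (M : Type) [AddCommGroup M] [Module k M]
    [Module Aᵐᵒᵖ M] [IsScalarTower k Aᵐᵒᵖ M] : SMulCommClass Aᵐᵒᵖ k M :=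
  IsScalarTower.to_smulCommClass'

variable {n : ℕ} (e : Fin n → A)

/-- Pairing of a weight vector with an integral (dimension) vector. -/
def pz (δ β : Fin n → ℤ) : ℤ := ∑ i, δ i * β i

/-- Pairing of an integral weight vector with a real vector. -/
def przr (δ : Fin n → ℤ) (γ : Fin n → ℝ) : ℝ := ∑ i, (δ i : ℝ) * γ i

/-- Pairing of two real vectors. -/
def prr (δ γ : Fin n → ℝ) : ℝ := ∑ i, δ i * γ i

variable (M : Type) [AddCommGroup M] [Module k M] [Module Aᵐᵒᵖ M] [IsScalarTower k Aᵐᵒᵖ M]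

/-- Right multiplication by `e i`, as a `k`-linear endomorphism of a right `A`-module. -/
noncomputable def rmul (i : Fin n) : M →ₗ[k] M where
  toFun x := op (e i) • x
  map_add' x y := smul_add _ x y
  map_smul' c x := smul_comm _ c x

/-- The dimension vector: `i ↦ dim_k (M eᵢ)`. -/
noncomputable def dimVec : Fin n → ℤ :=
  fun i => (finrank k (LinearMap.range (rmul k A e M i)) : ℤ)

/-- The real dimension vector. -/
noncomputable def dimVecR : Fin n → ℝ :=
  fun i => (finrank k (LinearMap.range (rmul k A e M i)) : ℝ)

/-- The tropical F-polynomial: `f_M(δ) = max { δ(dim L) : L ⊆ M }`. -/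
noncomputable def tropF (δ : Fin n → ℤ) : ℤ :=
  sSup (Set.range fun L : Submodule Aᵐᵒᵖ M => pz δ (dimVec k A e L))

/-- The dual tropical F-polynomial: `f̌_M(δ) = max { δ(dim N) : M ↠ N }`. -/
noncomputable def tropCheck (δ : Fin n → ℤ) : ℤ :=
  sSup (Set.range fun L : Submodule Aᵐᵒᵖ M => pz δ (dimVec k A e (M ⧸ L)))

/-- The Newton polytope of `M`: the convex hull of dimension vectors of submodules. -/
noncomputable def newton : Set (Fin n → ℝ) :=
  convexHull ℝ {x | ∃ L : Submodule Aᵐᵒᵖ M, x = dimVecR k A e L}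

/-- The dual Newton polytope of `M`: convex hull of dimension vectors of quotients. -/
noncomputable def newtonCheck : Set (Fin n → ℝ) :=
  convexHull ℝ {x | ∃ L : Submodule Aᵐᵒᵖ M, x = dimVecR k A e (M ⧸ L)}

/-- King's `δ`-semistability. -/
def IsSemistable (δ : Fin n → ℤ) : Prop :=
  pz δ (dimVec k A e M) = 0 ∧ ∀ L : Submodule Aᵐᵒᵖ M, pz δ (dimVec k A e L) ≤ 0

/-- `δ`-semistability for a real weight. -/
def IsSemistableR (δ : Fin n → ℝ) : Prop :=
  prr δ (dimVecR k A e M) = 0 ∧ ∀ L : Submodule Aᵐᵒᵖ M, prr δ (dimVecR k A e L) ≤ 0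

/-- `δ`-stability. -/
def IsStable (δ : Fin n → ℤ) : Prop :=
  pz δ (dimVec k A e M) = 0 ∧
    ∀ L : Submodule Aᵐᵒᵖ M, L ≠ ⊥ → L ≠ ⊤ → pz δ (dimVec k A e L) < 0

section HomE

variable {P Q : Type} [AddCommGroup P] [Module Aᵐᵒᵖ P] [AddCommGroup Q] [Module Aᵐᵒᵖ Q]

/-- The `k`-linear map `Hom_A(Q, M) → Hom_A(P, M)` induced by `d : P → Q`. -/
noncomputable def homMap (d : P →ₗ[Aᵐᵒᵖ] Q) : (Q →ₗ[Aᵐᵒᵖ] M) →ₗ[k] (P →ₗ[Aᵐᵒᵖ] M) where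
  toFun f := f ∘ₗ d
  map_add' f g := LinearMap.add_comp _ _ _
  map_smul' c f := LinearMap.smul_comp _ _ _

/-- `dim_k Hom(d, M)`: the kernel of the induced map. -/
noncomputable def homNum (d : P →ₗ[Aᵐᵒᵖ] Q) : ℕ :=
  finrank k (LinearMap.ker (homMap k A M d))

/-- `dim_k E(d, M)`: the cokernel of the induced map. -/
noncomputable def eNum (d : P →ₗ[Aᵐᵒᵖ] Q) : ℕ :=
  finrank k ((P →ₗ[Aᵐᵒᵖ] M) ⧸ LinearMap.range (homMap k A M d))

end HomE

/-- The indecomposable projective right module `e i · A`. -/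
abbrev projP (i : Fin n) : Submodule Aᵐᵒᵖ A := Submodule.span Aᵐᵒᵖ {e i}

/-- The projective right module `P(β) = ⊕ᵢ (eᵢA)^{β i}`. -/
abbrev PP (β : Fin n → ℕ) : Type := Π i : Fin n, Fin (β i) → projP A e i

/-- The weight condition `β₊ - β₋ = δ`. -/
def HasWt (βm βp : Fin n → ℕ) (δ : Fin n → ℤ) : Prop :=
  ∀ i, (βp i : ℤ) - (βm i : ℤ) = δ i

/-- The cokernel of a projective presentation. -/
abbrev Coker {βm βp : Fin n → ℕ} (d : PP A e βm →ₗ[Aᵐᵒᵖ] PP A e βp) : Type :=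
  PP A e βp ⧸ LinearMap.range d

/-- `hom(δ, M)`: min of `dim_k Hom(d,M)` over projective presentations `d` of weight `δ`. -/
noncomputable def homWt (δ : Fin n → ℤ) : ℕ :=
  sInf {m : ℕ | ∃ (βm βp : Fin n → ℕ) (d : PP A e βm →ₗ[Aᵐᵒᵖ] PP A e βp),
    HasWt βm βp δ ∧ m = homNum k A M d}

/-- `e(δ, M)`: min of `dim_k E(d,M)` over projective presentations `d` of weight `δ`. -/
noncomputable def eWt (δ : Fin n → ℤ) : ℕ :=
  sInf {m : ℕ | ∃ (βm βp : Fin n → ℕ) (d : PP A e βm →ₗ[Aᵐᵒᵖ] PP A e βp),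
    HasWt βm βp δ ∧ m = eNum k A M d}

/-- The indecomposable left module `A · e i`. -/
abbrev projL (i : Fin n) : Submodule A A := Submodule.span A {e i}

section DualMod

variable (V : Type) [AddCommGroup V] [Module k V] [Module A V] [IsScalarTower k A V]

/-- Left multiplication by `a` as a `k`-linear endomorphism of a left module. -/
noncomputable def lact (a : A) : V →ₗ[k] V where
  toFun x := a • x
  map_add' x y := smul_add a x y
  map_smul' c x := smul_comm a c x

/-- The right `A`-action on the `k`-dual of a left `A`-module. -/
noncomputable instance dualSMul : SMul Aᵐᵒᵖ (V →ₗ[k] k) :=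
  ⟨fun a f => f ∘ₗ lact k A V a.unop⟩

@[simp] lemma dual_smul_apply (a : Aᵐᵒᵖ) (f : V →ₗ[k] k) (x : V) :
    (a • f) x = f (a.unop • x) := rfl

/-- The `k`-dual of a left `A`-module is a right `A`-module. -/
noncomputable instance dualModule : Module Aᵐᵒᵖ (V →ₗ[k] k) :=
  { dualSMul k A V with
    one_smul := fun f => by ext x; simp
    mul_smul := fun a b f => by ext x; simp [mul_smul]
    smul_zero := fun a => by ext x; simp
    smul_add := fun a f g => by ext x; simp
    add_smul := fun a b f => by ext x; simp [add_smul]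
    zero_smul := fun f => by ext x; simp }

instance dualSMulComm : SMulCommClass Aᵐᵒᵖ k (V →ₗ[k] k) :=
  ⟨fun a c f => by ext x; simp⟩

instance dualTower : IsScalarTower k Aᵐᵒᵖ (V →ₗ[k] k) :=
  ⟨fun c a f => by ext x; simp [MulOpposite.unop_smul, smul_assoc]⟩

end DualMod

/-- The indecomposable injective right module `Iᵢ = D(A eᵢ)`,
the `k`-dual of the left module `A eᵢ`. -/
abbrev IP (i : Fin n) : Type := (projL A e i) →ₗ[k] k

/-- The injective right module `I(β) = ⊕ᵢ Iᵢ^{β i}`. -/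
abbrev IM (β : Fin n → ℕ) : Type := Π i : Fin n, Fin (β i) → IP k A e i

section PostMap

variable {I J : Type} [AddCommGroup I] [Module k I] [Module Aᵐᵒᵖ I] [IsScalarTower k Aᵐᵒᵖ I]
variable [AddCommGroup J] [Module k J] [Module Aᵐᵒᵖ J] [IsScalarTower k Aᵐᵒᵖ J]

/-- The `k`-linear map `Hom_A(M, I) → Hom_A(M, J)` induced by `dc : I → J`. -/
noncomputable def postMap (dc : I →ₗ[Aᵐᵒᵖ] J) :
    (M →ₗ[Aᵐᵒᵖ] I) →ₗ[k] (M →ₗ[Aᵐᵒᵖ] J) where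
  toFun f := dc ∘ₗ f
  map_add' f g := LinearMap.comp_add _ _ _
  map_smul' c f := by
    ext x
    simp only [LinearMap.comp_apply, LinearMap.smul_apply, RingHom.id_apply]
    rw [← algebraMap_smul Aᵐᵒᵖ c (f x), LinearMap.map_smul, algebraMap_smul]

end PostMap

/-- `hom(M, δ̌)`: min of `dim_k Hom(M, ď)` over injective presentations `ď` of weight `δ̌`. -/
noncomputable def ihomWt (δc : Fin n → ℤ) : ℕ :=
  sInf {m : ℕ | ∃ (βp βm : Fin n → ℕ) (dc : IM k A e βp →ₗ[Aᵐᵒᵖ] IM k A e βm),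
    HasWt βm βp δc ∧ m = finrank k (LinearMap.ker (postMap k A M dc))}

/-- `ě(M, δ̌)`: min of `dim_k Ě(M, ď)` over injective presentations `ď` of weight `δ̌`. -/
noncomputable def ieWt (δc : Fin n → ℤ) : ℕ :=
  sInf {m : ℕ | ∃ (βp βm : Fin n → ℕ) (dc : IM k A e βp →ₗ[Aᵐᵒᵖ] IM k A e βm),
    HasWt βm βp δc ∧
      m = Module.finrank k (@HasQuotient.Quotient (M →ₗ[Aᵐᵒᵖ] IM k A e βm) _
        (Submodule.hasQuotient (M := M →ₗ[Aᵐᵒᵖ] IM k A e βm)) (LinearMap.range (postMap k A M dc)))}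

/-- `e(δ, δ) = 0`: there are projective presentations `d, d'` of weight `δ` with
`E(d, Coker d') = 0`, i.e. the induced map on `Hom`s is surjective. -/
def EWtSelfZero (δ : Fin n → ℤ) : Prop :=
  ∃ (βm βp : Fin n → ℕ) (d : PP A e βm →ₗ[Aᵐᵒᵖ] PP A e βp)
    (βm' βp' : Fin n → ℕ) (d' : PP A e βm' →ₗ[Aᵐᵒᵖ] PP A e βp'),
    HasWt βm βp δ ∧ HasWt βm' βp' δ ∧
      Function.Surjective (homMap k A (Coker A e d') d)

/-- `e₁, …, e_n` is a complete set of primitive orthogonal idempotents and `A` is basic: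
the indecomposable projectives `eᵢA` are pairwise non-isomorphic. -/
def IsBasicSetup : Prop :=
  (∀ i, IsIdempotentElem (e i)) ∧
  (∀ i j, i ≠ j → e i * e j = 0) ∧
  (∑ i, e i = 1) ∧
  (∀ i, e i ≠ 0 ∧ ∀ f g : A, IsIdempotentElem f → IsIdempotentElem g →
      f * g = 0 → g * f = 0 → f + g = e i → f = 0 ∨ g = 0) ∧
  (∀ i j, i ≠ j → IsEmpty (projP A e i ≃ₗ[Aᵐᵒᵖ] projP A e j))

end Defs

end TropGP

open TropGP Module MulOpposite

namespace St13

open TropGP Module MulOpposite LinearMap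

variable (k : Type) [Field k] (A : Type) [Ring A] [Algebra k A]
variable {n : ℕ} (e : Fin n → A)

/-- The canonical generator of `projP A e i`. -/
def gen (i : Fin n) : projP A e i := ⟨e i, Submodule.mem_span_singleton_self _⟩

@[simp] lemma coe_gen (i : Fin n) : ((gen A e i : projP A e i) : A) = e i := rfl

lemma smul_gen {i : Fin n} (hi : IsIdempotentElem (e i)) :
    op (e i) • gen A e i = gen A e i := by
  apply Subtype.ext
  show e i * e i = e i
  exact hi

section N

variable (N : Type) [AddCommGroup N] [Module k N] [Module Aᵐᵒᵖ N] [IsScalarTower k Aᵐᵒᵖ N]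

/-- The `Aᵐᵒᵖ`-linear map `projP A e i → N` sending `p` to `op p • x`. -/
def toHom (i : Fin n) (x : N) : projP A e i →ₗ[Aᵐᵒᵖ] N where
  toFun p := op (p : A) • x
  map_add' p q := by
    show op ((p + q : projP A e i) : A) • x = op (p : A) • x + op (q : A) • x
    rw [Submodule.coe_add, op_add, add_smul]
  map_smul' b p := by
    show op ((b • p : projP A e i) : A) • x = b • (op (p : A) • x)
    rw [Submodule.coe_smul, MulOpposite.smul_eq_mul_unop, op_mul, op_unop, mul_smul]

lemma mem_range_rmul_iff {i : Fin n} (hi : IsIdempotentElem (e i)) (x : N) :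
    x ∈ LinearMap.range (rmul k A e N i) ↔ op (e i) • x = x := by
  constructor
  · rintro ⟨m, rfl⟩
    show op (e i) • (op (e i) • m) = op (e i) • m
    rw [smul_smul, ← op_mul, hi]
  · intro h
    exact ⟨x, h⟩

/-- `Hom_A(e_i A, N) ≅ N e_i` as `k`-vector spaces. -/
noncomputable def homEquiv (i : Fin n) (hi : IsIdempotentElem (e i)) :
    (projP A e i →ₗ[Aᵐᵒᵖ] N) ≃ₗ[k] LinearMap.range (rmul k A e N i) where
  toFun f := ⟨f (gen A e i), (mem_range_rmul_iff k A e N hi _).2 (by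
      rw [← map_smul, smul_gen A e hi])⟩
  map_add' f g := rfl
  map_smul' c f := rfl
  invFun x := toHom A e N i (x : N)
  left_inv f := by
    ext p
    obtain ⟨a, ha⟩ := Submodule.mem_span_singleton.mp p.2
    have hp : p = a • gen A e i := Subtype.ext ha.symm
    rw [hp]
    show op ((a • gen A e i : projP A e i) : A) • f (gen A e i) = f (a • gen A e i)
    rw [map_smul, Submodule.coe_smul, coe_gen, MulOpposite.smul_eq_mul_unop, op_mul, op_unop,
      mul_smul, ← map_smul, smul_gen A e hi]
  right_inv x := by
    apply Subtype.ext
    show op ((gen A e i : projP A e i) : A) • (x : N) = (x : N)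
    rw [coe_gen]
    exact (mem_range_rmul_iff k A e N hi _).1 x.2

/-- `Hom_A(P(β), N) ≅ Πᵢⱼ Hom_A(e_i A, N)`. -/
noncomputable def ppHomEquiv (β : Fin n → ℕ) :
    (PP A e β →ₗ[Aᵐᵒᵖ] N) ≃ₗ[k] Π i, Fin (β i) → (projP A e i →ₗ[Aᵐᵒᵖ] N) :=
  (LinearMap.lsum Aᵐᵒᵖ (fun i => Fin (β i) → projP A e i) k).symm.trans
    (LinearEquiv.piCongrRight fun i =>
      (LinearMap.lsum Aᵐᵒᵖ (fun _ : Fin (β i) => projP A e i) k).symm)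

/-- `Hom_A(P(β), N) ≅ Πᵢⱼ N e_i`. -/
noncomputable def fullEquiv (hidem : ∀ i, IsIdempotentElem (e i)) (β : Fin n → ℕ) :
    (PP A e β →ₗ[Aᵐᵒᵖ] N) ≃ₗ[k] Π i, Fin (β i) → LinearMap.range (rmul k A e N i) :=
  (ppHomEquiv k A e N β).trans
    (LinearEquiv.piCongrRight fun i => LinearEquiv.piCongrRight fun _ =>
      homEquiv k A e N i (hidem i))

theorem finrank_hom_PP [FiniteDimensional k N] (hidem : ∀ i, IsIdempotentElem (e i))
    (β : Fin n → ℕ) :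
    finrank k (PP A e β →ₗ[Aᵐᵒᵖ] N)
      = ∑ i, β i * finrank k (LinearMap.range (rmul k A e N i)) := by
  rw [LinearEquiv.finrank_eq (fullEquiv k A e N hidem β), Module.finrank_pi_fintype k]
  refine Finset.sum_congr rfl fun i _ => ?_
  rw [Module.finrank_pi_fintype k, Finset.sum_const, Finset.card_univ, Fintype.card_fin,
    smul_eq_mul]

end N

/-- The regular right module `A` is isomorphic to `Aᵐᵒᵖ` as `Aᵐᵒᵖ`-module. -/
def regEquiv : Aᵐᵒᵖ ≃ₗ[Aᵐᵒᵖ] A where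
  toFun := unop
  invFun := op
  map_add' _ _ := rfl
  map_smul' _ _ := rfl
  left_inv _ := rfl
  right_inv _ := rfl

lemma ei_mul_coe {i : Fin n} (hi : IsIdempotentElem (e i)) (p : projP A e i) :
    e i * (p : A) = (p : A) := by
  obtain ⟨a, ha⟩ := Submodule.mem_span_singleton.mp p.2
  rw [← ha, MulOpposite.smul_eq_mul_unop, ← mul_assoc, hi]

/-- The retraction `A → e_i A`. -/
def retr (i : Fin n) : A →ₗ[Aᵐᵒᵖ] projP A e i where
  toFun a := ⟨e i * a, by
    rw [show e i * a = op a • e i from rfl]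
    exact Submodule.smul_mem _ _ (Submodule.mem_span_singleton_self _)⟩
  map_add' a b := Subtype.ext (mul_add _ _ _)
  map_smul' c a := Subtype.ext (by
    show e i * (a * unop c) = (e i * a) * unop c
    rw [mul_assoc])

theorem projP_projective (i : Fin n) (hi : IsIdempotentElem (e i)) :
    Module.Projective Aᵐᵒᵖ (projP A e i) := by
  have hA : Module.Projective Aᵐᵒᵖ A := Module.Projective.of_equiv (regEquiv A)
  refine Module.Projective.of_split (Submodule.subtype _) (retr A e i) ?_
  ext p
  show e i * (p : A) = (p : A)
  exact ei_mul_coe A e hi p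

theorem PP_projective (hidem : ∀ i, IsIdempotentElem (e i)) (β : Fin n → ℕ) :
    Module.Projective Aᵐᵒᵖ (PP A e β) := by
  have h2 : ∀ i, Module.Projective Aᵐᵒᵖ (Fin (β i) → projP A e i) := fun i => by
    haveI : ∀ _ : Fin (β i), Module.Projective Aᵐᵒᵖ (projP A e i) :=
      fun _ => projP_projective A e i (hidem i)
    exact Module.Projective.of_equiv (M := Π₀ _ : Fin (β i), projP A e i)
      (DirectSum.linearEquivFunOnFintype Aᵐᵒᵖ (Fin (β i)) fun _ => projP A e i)
  haveI := h2
  exact Module.Projective.of_equiv (M := Π₀ i, (Fin (β i) → projP A e i))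
    (DirectSum.linearEquivFunOnFintype Aᵐᵒᵖ (Fin n) fun i => Fin (β i) → projP A e i)

section Ker

variable (N : Type) [AddCommGroup N] [Module k N] [Module Aᵐᵒᵖ N] [IsScalarTower k Aᵐᵒᵖ N]
variable {P Q : Type} [AddCommGroup P] [Module Aᵐᵒᵖ P] [AddCommGroup Q] [Module Aᵐᵒᵖ Q]

/-- `Hom_A(coker d, N) ≅ ker (Hom(d, N))`. -/
noncomputable def kerEquiv (d : P →ₗ[Aᵐᵒᵖ] Q) :
    ((Q ⧸ LinearMap.range d) →ₗ[Aᵐᵒᵖ] N) ≃ₗ[k] LinearMap.ker (homMap k A N d) :=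
  LinearEquiv.ofBijective
    { toFun := fun f => ⟨f ∘ₗ (LinearMap.range d).mkQ, by
        rw [LinearMap.mem_ker]
        refine LinearMap.ext fun x => ?_
        show f ((LinearMap.range d).mkQ (d x)) = 0
        rw [Submodule.mkQ_apply, (Submodule.Quotient.mk_eq_zero _).2 (LinearMap.mem_range_self d x),
          map_zero]⟩
      map_add' := fun f g => Subtype.ext (LinearMap.add_comp _ _ _)
      map_smul' := fun c f => Subtype.ext (LinearMap.smul_comp _ _ _) }
    ⟨fun f g h => Submodule.linearMap_qext _ (congrArg Subtype.val h),
     fun g => ⟨(LinearMap.range d).liftQ g.1 (by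
        rintro _ ⟨x, rfl⟩
        exact LinearMap.congr_fun (LinearMap.mem_ker.mp g.2) x),
      Subtype.ext (Submodule.liftQ_mkQ _ _ _)⟩⟩

end Ker

theorem homMap_surj_quot {βm βp : Fin n → ℕ} (d : PP A e βm →ₗ[Aᵐᵒᵖ] PP A e βp)
    (hidem : ∀ i, IsIdempotentElem (e i))
    (hrig : Function.Surjective (homMap k A (Coker A e d) d))
    (K : Submodule Aᵐᵒᵖ (Coker A e d)) :
    Function.Surjective (homMap k A (Coker A e d ⧸ K) d) := by
  intro g
  haveI := PP_projective A e hidem βm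
  obtain ⟨g', hg'⟩ := Module.projective_lifting_property K.mkQ g K.mkQ_surjective
  obtain ⟨f, hf⟩ := hrig g'
  refine ⟨K.mkQ ∘ₗ f, ?_⟩
  show (K.mkQ ∘ₗ f) ∘ₗ d = g
  rw [LinearMap.comp_assoc]
  have hfd : f ∘ₗ d = g' := hf
  rw [hfd, hg']

theorem fd_sub (X : Type) [AddCommGroup X] [Module k X] [Module Aᵐᵒᵖ X]
    [IsScalarTower k Aᵐᵒᵖ X] [FiniteDimensional k X] (p : Submodule Aᵐᵒᵖ X) :
    FiniteDimensional k p := by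
  apply FiniteDimensional.of_injective (p.subtype.restrictScalars k)
  rw [LinearMap.coe_restrictScalars]
  exact Submodule.injective_subtype p

theorem fd_quot (X : Type) [AddCommGroup X] [Module k X] [Module Aᵐᵒᵖ X]
    [IsScalarTower k Aᵐᵒᵖ X] [FiniteDimensional k X] (p : Submodule Aᵐᵒᵖ X) :
    FiniteDimensional k (X ⧸ p) := by
  apply Module.Finite.of_surjective (p.mkQ.restrictScalars k)
  rw [LinearMap.coe_restrictScalars]
  exact Submodule.mkQ_surjective p

theorem fd_projP [FiniteDimensional k A] (i : Fin n) :
    FiniteDimensional k (projP A e i) :=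
  fd_sub k A A (projP A e i)

theorem fd_PP [FiniteDimensional k A] (β : Fin n → ℕ) :
    FiniteDimensional k (PP A e β) := by
  haveI := fun i => fd_projP k A e i
  infer_instance

end St13

set_option maxHeartbeats 1000000 in
/-- Let `d` be a projective presentation of weight `δ` with cokernel `M`
and suppose `E(d,M) = 0`.  Then for every quotient `N` of `M`:
`δ(dim N) = dim_k Hom_A(M,N)`; in particular `δ(dim N) = 0` iff `N = 0`, and
`δ(dim N) > 0` for every nonzero quotient. -/
theorem statement13 (k : Type) [Field k] [IsAlgClosed k] [CharZero k]
    (A : Type) [Ring A] [Algebra k A] [FiniteDimensional k A]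
    {n : ℕ} (e : Fin n → A) (hA : IsBasicSetup A e)
    (βm βp : Fin n → ℕ) (d : PP A e βm →ₗ[Aᵐᵒᵖ] PP A e βp)
    (δ : Fin n → ℤ) (hw : HasWt βm βp δ)
    (hrig : Function.Surjective (homMap k A (Coker A e d) d)) :
    ∀ K : Submodule Aᵐᵒᵖ (Coker A e d),
      pz δ (dimVec k A e (Coker A e d ⧸ K)) =
        (finrank k (Coker A e d →ₗ[Aᵐᵒᵖ] (Coker A e d ⧸ K)) : ℤ) ∧
      (pz δ (dimVec k A e (Coker A e d ⧸ K)) = 0 ↔ K = ⊤) ∧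
      (K ≠ ⊤ → 0 < pz δ (dimVec k A e (Coker A e d ⧸ K))) := by
  intro K
  have hidem : ∀ i, IsIdempotentElem (e i) := hA.1
  set M := Coker A e d with hM
  set N := M ⧸ K with hN
  -- finite-dimensionality
  haveI hfdp : FiniteDimensional k (PP A e βp) := St13.fd_PP k A e βp
  haveI hfdm : FiniteDimensional k (PP A e βm) := St13.fd_PP k A e βm
  haveI hfdM : FiniteDimensional k M :=
    St13.fd_quot k A (PP A e βp) (LinearMap.range d)
  haveI hfdN : FiniteDimensional k N := St13.fd_quot k A M K
  haveI hfdHp : FiniteDimensional k (PP A e βp →ₗ[Aᵐᵒᵖ] N) :=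
    Module.Finite.equiv (St13.fullEquiv k A e N hidem βp).symm
  haveI hfdHm : FiniteDimensional k (PP A e βm →ₗ[Aᵐᵒᵖ] N) :=
    Module.Finite.equiv (St13.fullEquiv k A e N hidem βm).symm
  haveI hfdHM : FiniteDimensional k (M →ₗ[Aᵐᵒᵖ] N) :=
    Module.Finite.equiv (St13.kerEquiv k A N d).symm
  -- the dimension count
  have hsurj : Function.Surjective (homMap k A N d) :=
    St13.homMap_surj_quot k A e d hidem hrig K
  have hrk : finrank k (LinearMap.range (homMap k A N d))
      + finrank k (LinearMap.ker (homMap k A N d))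
      = finrank k (PP A e βp →ₗ[Aᵐᵒᵖ] N) :=
    LinearMap.finrank_range_add_finrank_ker _
  have hrange : finrank k (LinearMap.range (homMap k A N d))
      = finrank k (PP A e βm →ₗ[Aᵐᵒᵖ] N) := by
    rw [LinearMap.range_eq_top.2 hsurj, finrank_top]
  have hker : finrank k (LinearMap.ker (homMap k A N d)) = finrank k (M →ₗ[Aᵐᵒᵖ] N) :=
    (LinearEquiv.finrank_eq (St13.kerEquiv k A N d)).symm
  set dv : Fin n → ℕ := fun i => finrank k (LinearMap.range (rmul k A e N i)) with hdv
  have hp : finrank k (PP A e βp →ₗ[Aᵐᵒᵖ] N) = ∑ i, βp i * dv i :=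
    St13.finrank_hom_PP k A e N hidem βp
  have hm : finrank k (PP A e βm →ₗ[Aᵐᵒᵖ] N) = ∑ i, βm i * dv i :=
    St13.finrank_hom_PP k A e N hidem βm
  have key : finrank k (M →ₗ[Aᵐᵒᵖ] N) + ∑ i, βm i * dv i = ∑ i, βp i * dv i := by
    omega
  have goal1 : pz δ (dimVec k A e N) = (finrank k (M →ₗ[Aᵐᵒᵖ] N) : ℤ) := by
    have h0 : pz δ (dimVec k A e N) = ∑ i, δ i * (dv i : ℤ) := rfl
    rw [h0]
    calc ∑ i, δ i * (dv i : ℤ) = ∑ i, ((βp i : ℤ) - (βm i : ℤ)) * (dv i : ℤ) :=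
          Finset.sum_congr rfl fun i _ => by rw [hw i]
      _ = (∑ i, (βp i : ℤ) * (dv i : ℤ)) - ∑ i, (βm i : ℤ) * (dv i : ℤ) := by
          rw [← Finset.sum_sub_distrib]
          exact Finset.sum_congr rfl fun i _ => by ring
      _ = ((∑ i, βp i * dv i : ℕ) : ℤ) - ((∑ i, βm i * dv i : ℕ) : ℤ) := by push_cast; ring
      _ = (finrank k (M →ₗ[Aᵐᵒᵖ] N) : ℤ) := by rw [← key]; push_cast; ring
  have iff2 : pz δ (dimVec k A e N) = 0 ↔ K = ⊤ := by
    constructor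
    · intro h0
      rw [goal1, Nat.cast_eq_zero] at h0
      haveI : Subsingleton (M →ₗ[Aᵐᵒᵖ] N) := finrank_zero_iff.mp h0
      have hz : K.mkQ = 0 := Subsingleton.elim _ _
      rw [Submodule.eq_top_iff']
      intro x
      have hx := LinearMap.congr_fun hz x
      rw [Submodule.mkQ_apply, LinearMap.zero_apply] at hx
      exact (Submodule.Quotient.mk_eq_zero _).1 hx
    · intro hK
      haveI : Subsingleton N := by
        rw [hN, hK]
        exact Submodule.Quotient.subsingleton_iff.mpr rfl
      rw [goal1, Nat.cast_eq_zero]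
      exact finrank_zero_iff.mpr inferInstance
  refine ⟨goal1, iff2, fun hK => ?_⟩
  have hne : pz δ (dimVec k A e N) ≠ 0 := fun h => hK (iff2.mp h)
  rw [goal1] at hne ⊢
  omega
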